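/- Let (G, D_G) be a Dirac Lie group and H a closed connected subgroup. For a Lagrangian subspace D ⊆ g × g* satisfying g₀ × {0} ⊆ D ⊆ g × p₁, the subset D'(g) = {(x^L(g) + v_g, ξ^L(g)) | (x,ξ) ∈ D, (v_g, ξ^L(g)) ∈ D_G(g)} is a Dirac structure on G, and D'(e) = D. -/

import Mathlib

open scoped Manifold
noncomputable section
namespace DiracPaper

section LagrGen
variable {V : Type*} [NormedAddCommGroup V] [NormedSpace ℝ V]

/-- A subspace of `V ⊕ V*` is Lagrangian if it coincides with its orthogonal for the
canonical pairing `⟨(x,ξ),(y,η)⟩ = ξ(y) + η(x)`. -/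
def IsLagr (D : Submodule ℝ (V × (V →L[ℝ] ℝ))) : Prop :=
  ∀ p : V × (V →L[ℝ] ℝ), p ∈ D ↔ ∀ q ∈ D, p.2 q.1 + q.2 p.1 = 0

end LagrGen

variable {E : Type*} [NormedAddCommGroup E] [NormedSpace ℝ E]
variable {G : Type*} [TopologicalSpace G] [ChartedSpace E G] [Group G] [LieGroup 𝓘(ℝ, E) (⊤ : ℕ∞) G]

/-- The differential of left translation `L_g` at the point `h` (all tangent spaces being
identified with the model space `E`). -/
def dL (g h : G) : E →L[ℝ] E := mfderiv 𝓘(ℝ, E) 𝓘(ℝ, E) (fun x => g * x) h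

/-- The differential of right translation `R_h` at the point `g`. -/
def dR (h g : G) : E →L[ℝ] E := mfderiv 𝓘(ℝ, E) 𝓘(ℝ, E) (fun x => x * h) g

/-- The differential at the neutral element of a real valued function on `G`. -/
def d1 (f : G → ℝ) : E →L[ℝ] ℝ := mfderiv 𝓘(ℝ, E) 𝓘(ℝ, ℝ) f (1 : G)

/-- The left invariant vector field associated to `x ∈ 𝔤 = T_e G`. -/
def xL (x : E) (g : G) : E := dL g 1 x

/-- The left invariant one-form associated to `ξ ∈ 𝔤*`: `ξ^L(g) = (T_g L_{g⁻¹})^* ξ`. -/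
def leftForm (ξ : E →L[ℝ] ℝ) (g : G) : E →L[ℝ] ℝ := ξ.comp (dL g⁻¹ g)

/-- The right invariant one-form associated to `ξ ∈ 𝔤*`: `ξ^R(g) = (T_g R_{g⁻¹})^* ξ`. -/
def rightForm (ξ : E →L[ℝ] ℝ) (g : G) : E →L[ℝ] ℝ := ξ.comp (dR g⁻¹ g)

/-- The adjoint action of `G` on `𝔤 = T_e G`. -/
def Ad (g : G) : E →L[ℝ] E := mfderiv 𝓘(ℝ, E) 𝓘(ℝ, E) (fun x => g * x * g⁻¹) 1

variable (G) in
/-- The adjoint action of `𝔤` on itself, obtained by differentiating `Ad` at `e`;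
`adCLM G x y = ⁅x, y⁆`. -/
def adCLM : E →L[ℝ] E →L[ℝ] E :=
  mfderiv 𝓘(ℝ, E) 𝓘(ℝ, E →L[ℝ] E) (Ad : G → (E →L[ℝ] E)) 1

variable (G) in
/-- The Lie bracket on `𝔤 = T_e G`. -/
def bra (x y : E) : E := adCLM G x y

variable (G) in
/-- The coadjoint action: `(coadW G x ξ) y = ξ ⁅y, x⁆`, i.e. `ad_x^* ξ`. -/
def coadW (x : E) (ξ : E →L[ℝ] ℝ) : E →L[ℝ] ℝ := ξ.comp ((adCLM G).flip x)


/-- Multiplicativity of a field of subspaces `D(g) ⊆ T_g G ⊕ T_g^* G`: group multiplication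
is a forward Dirac map. -/
def MultDirac (D : G → Submodule ℝ (E × (E →L[ℝ] ℝ))) : Prop :=
  ∀ g h : G, ∀ p ∈ D (g * h), ∃ w u : E, ∃ β γ : E →L[ℝ] ℝ,
    (w, β) ∈ D g ∧ (u, γ) ∈ D h ∧ dR h g w + dL g h u = p.1 ∧
    β = p.2.comp (dR h g) ∧ γ = p.2.comp (dL g h)

/-- `𝔤₀ = G₀(e)`, the kernel of the Dirac structure at the neutral element. -/
def g0set (D : G → Submodule ℝ (E × (E →L[ℝ] ℝ))) : Set E := {x | (x, 0) ∈ D 1}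

/-- `𝔭₁ = P₁(e)`, the characteristic codistribution at the neutral element. -/
def p1set (D : G → Submodule ℝ (E × (E →L[ℝ] ℝ))) : Set (E →L[ℝ] ℝ) :=
  {ξ | ∃ x, (x, ξ) ∈ D 1}

/-- A smooth vector field `X = X_ξ` such that `(X_ξ, ξ^L)` is a section of `D`. -/
def SmoothSec (D : G → Submodule ℝ (E × (E →L[ℝ] ℝ))) (ξ : E →L[ℝ] ℝ) (X : G → E) : Prop :=
  ContMDiff 𝓘(ℝ, E) 𝓘(ℝ, E) (⊤ : ℕ∞) X ∧ ∀ g, (X g, leftForm ξ g) ∈ D g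

/-- `p1br η X_ξ = [ξ, η] = d_e (η^L (X_ξ))`, the bracket of `ξ, η ∈ 𝔭₁` computed with a
choice of vector field `X_ξ`. -/
def p1br (η : E →L[ℝ] ℝ) (X : G → E) : E →L[ℝ] ℝ := d1 (fun g => leftForm η g (X g))

/-- `z ∈ 𝔤` represents `ad_η^* x ∈ 𝔤/𝔤₀ = 𝔭₁^*`, which is defined by
`(ad_η^* x)(θ) = [θ, η](x)`. -/
def RepAdStar (D : G → Submodule ℝ (E × (E →L[ℝ] ℝ))) (η : E →L[ℝ] ℝ) (x z : E) : Prop :=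
  ∀ θ ∈ p1set D, ∀ Xθ : G → E, SmoothSec D θ Xθ → θ z = p1br η Xθ x

/-- A one-parameter subgroup `c` of `G` with derivative `x` at `0` (playing the role of
`t ↦ exp (t x)`). -/
def OneParam (c : ℝ → G) (x : E) : Prop :=
  ContMDiff 𝓘(ℝ, ℝ) 𝓘(ℝ, E) (⊤ : ℕ∞) c ∧ c 0 = 1 ∧ (∀ s t : ℝ, c (s + t) = c s * c t) ∧
    (id (mfderiv 𝓘(ℝ, ℝ) 𝓘(ℝ, E) c 0 (1 : ℝ)) : E) = x

section Courant

variable {F : Type*} [NormedAddCommGroup F] [NormedSpace ℝ F]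
variable {M : Type*} [TopologicalSpace M] [ChartedSpace F M]

/-- The Lie bracket of two vector fields, computed in the trivialization of the tangent
bundle given by the identification `TangentSpace 𝓘(ℝ,F) m = F`. -/
def vLie (X Y : M → F) (m : M) : F :=
  (id (mfderiv 𝓘(ℝ, F) 𝓘(ℝ, F) Y m (X m)) : F) -
    (id (mfderiv 𝓘(ℝ, F) 𝓘(ℝ, F) X m (Y m)) : F)

/-- The Lie derivative `£_X β` of a one-form `β` along a vector field `X`, in the same
trivialization. -/
def lieDform (X : M → F) (β : M → (F →L[ℝ] ℝ)) (m : M) : F →L[ℝ] ℝ :=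
  (id (mfderiv 𝓘(ℝ, F) 𝓘(ℝ, F →L[ℝ] ℝ) β m (X m)) : F →L[ℝ] ℝ) +
    (β m).comp (id (mfderiv 𝓘(ℝ, F) 𝓘(ℝ, F) X m) : F →L[ℝ] F)

/-- The contraction `i_Y dα`, in the same trivialization. -/
def iotaDform (Y : M → F) (α : M → (F →L[ℝ] ℝ)) (m : M) : F →L[ℝ] ℝ :=
  (id (mfderiv 𝓘(ℝ, F) 𝓘(ℝ, F →L[ℝ] ℝ) α m (Y m)) : F →L[ℝ] ℝ) -
    (id (mfderiv 𝓘(ℝ, F) 𝓘(ℝ, F →L[ℝ] ℝ) α m) : F →L[ℝ] (F →L[ℝ] ℝ)).flip (Y m)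

/-- Integrability of a Dirac structure: closure of the space of smooth sections under the
Courant–Dorfman bracket `[(X,α),(Y,β)] = ([X,Y], £_X β − i_Y dα)`. -/
def CourantClosed (D : M → Submodule ℝ (F × (F →L[ℝ] ℝ))) : Prop :=
  ∀ (X Y : M → F) (α β : M → (F →L[ℝ] ℝ)),
    ContMDiff 𝓘(ℝ, F) 𝓘(ℝ, F) (⊤ : ℕ∞) X → ContMDiff 𝓘(ℝ, F) 𝓘(ℝ, F →L[ℝ] ℝ) (⊤ : ℕ∞) α →
    ContMDiff 𝓘(ℝ, F) 𝓘(ℝ, F) (⊤ : ℕ∞) Y → ContMDiff 𝓘(ℝ, F) 𝓘(ℝ, F →L[ℝ] ℝ) (⊤ : ℕ∞) β →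
    (∀ m, (X m, α m) ∈ D m) → (∀ m, (Y m, β m) ∈ D m) →
    ∀ m, (vLie X Y m, lieDform X β m - iotaDform Y α m) ∈ D m

end Courant

/-!
STATEMENT 18: given a Dirac Lie group `(G, D_G)`, a closed connected subgroup `H`, and
a Lagrangian subspace `𝔇 ⊆ 𝔤 × 𝔤*` with `𝔤₀ × {0} ⊆ 𝔇 ⊆ 𝔤 × 𝔭₁`, the family
`D'(g) = {(x^L(g) + v, ξ^L(g)) | (x,ξ) ∈ 𝔇, (v, ξ^L(g)) ∈ D_G(g)}` is a Dirac
structure on `G` with `D'(e) = 𝔇`.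
-/
/-! ### Auxiliary lemmas for the proof -/

section AuxLemmas

private lemma mdiffL (a h : G) : MDifferentiableAt 𝓘(ℝ, E) 𝓘(ℝ, E) (fun x => a * x) h :=
  ((contMDiff_mul_left (I := 𝓘(ℝ, E)) (n := ((⊤ : ℕ∞) : WithTop ℕ∞)) (a := a)).mdifferentiable (by simp)) h

private lemma mdiffR (a h : G) : MDifferentiableAt 𝓘(ℝ, E) 𝓘(ℝ, E) (fun x => x * a) h :=
  ((contMDiff_mul_right (I := 𝓘(ℝ, E)) (n := ((⊤ : ℕ∞) : WithTop ℕ∞)) (a := a)).mdifferentiable (by simp)) h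

private lemma mdiffConj (a h : G) :
    MDifferentiableAt 𝓘(ℝ, E) 𝓘(ℝ, E) (fun x => a * x * a⁻¹) h :=
  MDifferentiableAt.comp (I' := 𝓘(ℝ, E)) h (mdiffR a⁻¹ (a * h)) (mdiffL a h)

private lemma comp_aux (f₁ f₂ : G → G) (a b : G) (hb : f₂ a = b)
    (h₁ : MDifferentiableAt 𝓘(ℝ, E) 𝓘(ℝ, E) f₁ b)
    (h₂ : MDifferentiableAt 𝓘(ℝ, E) 𝓘(ℝ, E) f₂ a) :
    mfderiv 𝓘(ℝ, E) 𝓘(ℝ, E) (fun x => f₁ (f₂ x)) a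
      = (mfderiv 𝓘(ℝ, E) 𝓘(ℝ, E) f₁ b).comp (mfderiv 𝓘(ℝ, E) 𝓘(ℝ, E) f₂ a) := by
  subst hb
  exact mfderiv_comp a h₁ h₂

private lemma dL_inv_dL (g : G) :
    (dL g⁻¹ g).comp (dL g (1 : G)) = ContinuousLinearMap.id ℝ E := by
  have h := comp_aux (E := E) (fun x => g⁻¹ * x) (fun x => g * x) 1 g (mul_one g)
    (mdiffL g⁻¹ g) (mdiffL g 1)
  have h2 : (fun x : G => g⁻¹ * (g * x)) = (id : G → G) := by
    funext x; simp
  rw [h2, mfderiv_id] at h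
  exact h.symm

private lemma dL_dL_inv (g : G) :
    (dL g (1 : G)).comp (dL g⁻¹ g) = ContinuousLinearMap.id ℝ E := by
  have h := comp_aux (E := E) (fun x => g * x) (fun x => g⁻¹ * x) g 1 (inv_mul_cancel g)
    (mdiffL g 1) (mdiffL g⁻¹ g)
  have h2 : (fun x : G => g * (g⁻¹ * x)) = (id : G → G) := by
    funext x; simp
  rw [h2, mfderiv_id] at h
  exact h.symm

private lemma dR_dL (g : G) : (dR g⁻¹ g).comp (dL g (1 : G)) = Ad (E := E) g := by
  have h := comp_aux (E := E) (fun x => x * g⁻¹) (fun x => g * x) 1 g (mul_one g)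
    (mdiffR g⁻¹ g) (mdiffL g 1)
  exact h.symm

private lemma Ad_dR (g : G) : (Ad (E := E) g⁻¹).comp (dR g⁻¹ g) = dL g⁻¹ g := by
  have h := comp_aux (E := E) (fun x => g⁻¹ * x * g⁻¹⁻¹) (fun x => x * g⁻¹) g 1
    (mul_inv_cancel g) (mdiffConj g⁻¹ 1) (mdiffR g⁻¹ g)
  have h2 : (fun x : G => g⁻¹ * (x * g⁻¹) * g⁻¹⁻¹) = (fun x : G => g⁻¹ * x) := by
    funext x; simp [mul_assoc]
  rw [h2] at h
  exact h.symm

private lemma dL_one (h : G) : dL (1 : G) h = ContinuousLinearMap.id ℝ E := by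
  have h2 : (fun x : G => (1 : G) * x) = (id : G → G) := by funext x; simp
  rw [dL, h2, mfderiv_id]
  rfl

private lemma dR_one (g : G) : dR (1 : G) g = ContinuousLinearMap.id ℝ E := by
  have h2 : (fun x : G => x * (1 : G)) = (id : G → G) := by funext x; simp
  rw [dR, h2, mfderiv_id]
  rfl

private lemma dL_inv_apply (g : G) (x : E) : dL g⁻¹ g (dL g (1 : G) x) = x := by
  have := congrArg (fun T : E →L[ℝ] E => T x) (dL_inv_dL (G := G) g)
  simpa using this

private lemma dL_apply_inv (g : G) (y : E) : dL g (1 : G) (dL g⁻¹ g y) = y := by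
  have := congrArg (fun T : E →L[ℝ] E => T y) (dL_dL_inv (G := G) g)
  simpa using this

private lemma dR_dL_apply (g : G) (x : E) : dR g⁻¹ g (dL g (1 : G) x) = Ad g x := by
  have := congrArg (fun T : E →L[ℝ] E => T x) (dR_dL (G := G) g)
  simpa using this

private lemma Ad_dR_apply (g : G) (y : E) : Ad g⁻¹ (dR g⁻¹ g y) = dL g⁻¹ g y := by
  have := congrArg (fun T : E →L[ℝ] E => T y) (Ad_dR (G := G) g)
  simpa using this

private lemma leftForm_zero (g : G) : leftForm (0 : E →L[ℝ] ℝ) g = 0 :=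
  ContinuousLinearMap.zero_comp _

private lemma leftForm_add (ξ η : E →L[ℝ] ℝ) (g : G) :
    leftForm (ξ + η) g = leftForm ξ g + leftForm η g :=
  ContinuousLinearMap.add_comp _ _ _

private lemma leftForm_smul (c : ℝ) (ξ : E →L[ℝ] ℝ) (g : G) :
    leftForm (c • ξ) g = c • leftForm ξ g :=
  ContinuousLinearMap.smul_comp _ _ _

private lemma leftForm_xL (ξ : E →L[ℝ] ℝ) (g : G) (x : E) :
    leftForm ξ g (xL x g) = ξ x :=
  congrArg ξ (dL_inv_apply g x)

private lemma leftForm_one (ξ : E →L[ℝ] ℝ) : leftForm ξ (1 : G) = ξ := by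
  rw [leftForm, inv_one, dL_one, ContinuousLinearMap.comp_id]

private lemma xL_one (x : E) : xL x (1 : G) = x := by
  rw [xL, dL_one]; rfl

private lemma leftForm_dL (g : G) (α : E →L[ℝ] ℝ) :
    leftForm (α.comp (dL g (1 : G))) g = α := by
  ext y
  exact congrArg α (dL_apply_inv g y)

/-- The family `D'` of the theorem, as a family of submodules. -/
def Dp (D : G → Submodule ℝ (E × (E →L[ℝ] ℝ))) (𝔇 : Submodule ℝ (E × (E →L[ℝ] ℝ)))
    (g : G) : Submodule ℝ (E × (E →L[ℝ] ℝ)) where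
  carrier := {p | ∃ (x : E) (ξ : E →L[ℝ] ℝ) (v : E),
    (x, ξ) ∈ 𝔇 ∧ (v, leftForm ξ g) ∈ D g ∧ p = (xL x g + v, leftForm ξ g)}
  zero_mem' := by
    refine ⟨0, 0, 0, zero_mem _, ?_, ?_⟩
    · rw [leftForm_zero]; exact zero_mem _
    · rw [leftForm_zero]
      simp [xL, Prod.ext_iff]
  add_mem' := by
    rintro p q ⟨x, ξ, v, hx, hv, rfl⟩ ⟨y, η, w, hy, hw, rfl⟩
    refine ⟨x + y, ξ + η, v + w, add_mem hx hy, ?_, ?_⟩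
    · rw [leftForm_add]
      exact add_mem hv hw
    · rw [leftForm_add]
      refine Prod.ext_iff.mpr ⟨?_, rfl⟩
      show xL x g + v + (xL y g + w) = xL (x + y) g + (v + w)
      simp only [xL, map_add]
      abel
  smul_mem' := by
    rintro c p ⟨x, ξ, v, hx, hv, rfl⟩
    refine ⟨c • x, c • ξ, c • v, Submodule.smul_mem _ c hx, ?_, ?_⟩
    · rw [leftForm_smul]
      exact Submodule.smul_mem _ c hv
    · rw [leftForm_smul]
      refine Prod.ext_iff.mpr ⟨?_, rfl⟩
      show c • (xL x g + v) = xL (c • x) g + c • v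
      simp only [xL, map_smul, smul_add]

lemma mem_Dp (D : G → Submodule ℝ (E × (E →L[ℝ] ℝ))) (𝔇 : Submodule ℝ (E × (E →L[ℝ] ℝ)))
    (g : G) (p : E × (E →L[ℝ] ℝ)) :
    p ∈ Dp D 𝔇 g ↔ ∃ (x : E) (ξ : E →L[ℝ] ℝ) (v : E),
      (x, ξ) ∈ 𝔇 ∧ (v, leftForm ξ g) ∈ D g ∧ p = (xL x g + v, leftForm ξ g) :=
  Iff.rfl

end AuxLemmas

theorem pullback_dirac_structure_Dprime
    (D : G → Submodule ℝ (E × (E →L[ℝ] ℝ)))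
    (hLag : ∀ g : G, IsLagr (D g)) (hMult : MultDirac D)
    (H : Subgroup G) (hHclosed : IsClosed (H : Set G)) (hHconn : IsConnected (H : Set G))
    (𝔇 : Submodule ℝ (E × (E →L[ℝ] ℝ))) (h𝔇 : IsLagr 𝔇)
    (hlow : ∀ x ∈ g0set D, (x, (0 : E →L[ℝ] ℝ)) ∈ 𝔇)
    (hup : ∀ p ∈ 𝔇, p.2 ∈ p1set D) :
    ∃ D' : G → Submodule ℝ (E × (E →L[ℝ] ℝ)),
      (∀ (g : G) (p : E × (E →L[ℝ] ℝ)),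
        p ∈ D' g ↔ ∃ (x : E) (ξ : E →L[ℝ] ℝ) (v : E),
          (x, ξ) ∈ 𝔇 ∧ (v, leftForm ξ g) ∈ D g ∧ p = (xL x g + v, leftForm ξ g)) ∧
      (∀ g : G, IsLagr (D' g)) ∧
      (∀ p : E × (E →L[ℝ] ℝ), p ∈ D' 1 ↔ p ∈ 𝔇) := by
  classical
  -- elements of `D 1` with zero first component
  have hid : ∀ p ∈ D (1 : G), ((0 : E), p.2) ∈ D (1 : G) := by
    intro p hp
    obtain ⟨w, u, β, γ, hw, hu, hsum, hβ, hγ⟩ := hMult 1 1 p (by rwa [one_mul])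
    have hβ' : β = p.2 := by rw [hβ, dR_one, ContinuousLinearMap.comp_id]
    have hγ' : γ = p.2 := by rw [hγ, dL_one, ContinuousLinearMap.comp_id]
    have hsum' : w + u = p.1 := by
      rw [dR_one, dL_one] at hsum
      simpa using hsum
    have hmem : ((w, β) + (u, γ) - p) ∈ D 1 := sub_mem (add_mem hw hu) hp
    have he : (w, β) + (u, γ) - p = ((0 : E), p.2) := by
      rw [hβ', hγ']
      refine Prod.ext_iff.mpr ⟨?_, ?_⟩
      · show w + u - p.1 = 0
        rw [hsum', sub_self]
      · show p.2 + p.2 - p.2 = p.2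
        abel
    rwa [he] at hmem
  -- elements of `D 1` with zero second component
  have hker : ∀ p ∈ D (1 : G), ((p.1 : E), (0 : E →L[ℝ] ℝ)) ∈ D (1 : G) := by
    intro p hp
    have hmem : (p - ((0 : E), p.2)) ∈ D 1 := sub_mem hp (hid p hp)
    have he : p - ((0 : E), p.2) = ((p.1 : E), (0 : E →L[ℝ] ℝ)) := by
      refine Prod.ext_iff.mpr ⟨?_, ?_⟩
      · show p.1 - 0 = p.1
        rw [sub_zero]
      · show p.2 - p.2 = 0
        rw [sub_self]
    rwa [he] at hmem
  -- decomposition of elements of `D g`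
  have decomp : ∀ (g : G), ∀ p ∈ D g, ∃ u γ w, (u, γ) ∈ D 1 ∧ (w, p.2) ∈ D g ∧
      p.1 = xL u g + w ∧ p.2 = leftForm γ g := by
    intro g p hp
    obtain ⟨w, u, β, γ, hw, hu, hsum, hβ, hγ⟩ := hMult g 1 p (by rwa [mul_one])
    have hβ' : β = p.2 := by rw [hβ, dR_one, ContinuousLinearMap.comp_id]
    refine ⟨u, γ, w, hu, by rwa [hβ'] at hw, ?_, ?_⟩
    · have h1 : dR (1 : G) g w = w := by rw [dR_one]; rfl
      rw [← hsum, h1]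
      exact add_comm w (dL g 1 u)
    · rw [hγ]
      exact (leftForm_dL g p.2).symm
  -- right-translated witnesses
  have rwit : ∀ (g : G) (z : E) (ξ : E →L[ℝ] ℝ), (z, ξ) ∈ D 1 →
      ∃ w, (w, ξ.comp (dR g⁻¹ g)) ∈ D g := by
    intro g z ξ hz
    obtain ⟨w, u, β, γ, hw, hu, hsum, hβ, hγ⟩ := hMult g g⁻¹ (z, ξ) (by rwa [mul_inv_cancel])
    have hβ' : β = ξ.comp (dR g⁻¹ g) := hβ
    exact ⟨w, by rwa [hβ'] at hw⟩
  -- `Ad`-invariance of `𝔭₁`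
  have hAd : ∀ (g : G) (ξ : E →L[ℝ] ℝ), (∃ z, (z, ξ) ∈ D 1) →
      ∃ z', (z', ξ.comp (Ad g)) ∈ D 1 := by
    rintro g ξ ⟨z, hz⟩
    obtain ⟨w, hw⟩ := rwit g z ξ hz
    obtain ⟨u, γ, w', hu, hw', h1, h2⟩ := decomp g _ hw
    have h2' : ξ.comp (dR g⁻¹ g) = γ.comp (dL g⁻¹ g) := h2
    have hγ : γ = ξ.comp (Ad g) := by
      ext t
      calc γ t = γ (dL g⁻¹ g (dL g (1 : G) t)) := (congrArg γ (dL_inv_apply g t)).symm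
        _ = (γ.comp (dL g⁻¹ g)) (dL g (1 : G) t) := rfl
        _ = (ξ.comp (dR g⁻¹ g)) (dL g (1 : G) t) := by rw [h2']
        _ = ξ (dR g⁻¹ g (dL g (1 : G) t)) := rfl
        _ = ξ (Ad g t) := congrArg ξ (dR_dL_apply g t)
        _ = (ξ.comp (Ad g)) t := rfl
    exact ⟨u, by rwa [hγ] at hu⟩
  -- left-translated witnesses
  have lwit : ∀ (g : G) (ξ : E →L[ℝ] ℝ), (∃ z, (z, ξ) ∈ D 1) →
      ∃ w, (w, leftForm ξ g) ∈ D g := by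
    intro g ξ hξ
    obtain ⟨z', hz'⟩ := hAd g⁻¹ ξ hξ
    obtain ⟨w, hw⟩ := rwit g z' _ hz'
    refine ⟨w, ?_⟩
    have he : (ξ.comp (Ad g⁻¹)).comp (dR g⁻¹ g) = leftForm ξ g := by
      ext t
      calc (ξ.comp (Ad g⁻¹)).comp (dR g⁻¹ g) t = ξ (Ad g⁻¹ (dR g⁻¹ g t)) := rfl
        _ = ξ (dL g⁻¹ g t) := congrArg ξ (Ad_dR_apply g t)
        _ = leftForm ξ g t := rfl
    rwa [he] at hw
  refine ⟨Dp D 𝔇, mem_Dp D 𝔇, ?_, ?_⟩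
  · -- `D' g` is Lagrangian
    intro g p
    constructor
    · rintro ⟨x, ξ, v, hx, hv, rfl⟩ q hq
      obtain ⟨y, η, w, hy, hw, rfl⟩ := (mem_Dp D 𝔇 g q).mp hq
      show leftForm ξ g (xL y g + w) + leftForm η g (xL x g + v) = 0
      have e1 : leftForm ξ g (xL y g + w) = ξ y + leftForm ξ g w := by
        rw [map_add, leftForm_xL]
      have e2 : leftForm η g (xL x g + v) = η x + leftForm η g v := by
        rw [map_add, leftForm_xL]
      have p1 : ξ y + η x = 0 := (h𝔇 (x, ξ)).mp hx (y, η) hy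
      have p2 : leftForm ξ g w + leftForm η g v = 0 := (hLag g _).mp hv _ hw
      rw [e1, e2]
      linarith
    · intro hperp
      set ξ : E →L[ℝ] ℝ := p.2.comp (dL g (1 : G)) with hξdef
      have s1 : ∀ u : E, (u, (0 : E →L[ℝ] ℝ)) ∈ D 1 → p.2 (xL u g) = 0 := by
        intro u hu
        have hmem : ((xL u g + 0, leftForm 0 g) : E × (E →L[ℝ] ℝ)) ∈ Dp D 𝔇 g :=
          ⟨u, 0, 0, hlow u hu, by rw [leftForm_zero]; exact zero_mem _, rfl⟩
        have := hperp _ hmem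
        simpa [leftForm_zero] using this
      have hξ1 : ((0 : E), ξ) ∈ D 1 := by
        refine (hLag 1 ((0 : E), ξ)).mpr ?_
        intro q hq
        have h0 : ξ q.1 = 0 := s1 q.1 (hker q hq)
        show ξ q.1 + q.2 0 = 0
        rw [h0, map_zero, add_zero]
      obtain ⟨W, hW⟩ := lwit g ξ ⟨0, hξ1⟩
      have hα : leftForm ξ g = p.2 := leftForm_dL g p.2
      have hx0L : xL (dL g⁻¹ g (p.1 - W)) g = p.1 - W := dL_apply_inv g (p.1 - W)
      have hx𝔇 : (dL g⁻¹ g (p.1 - W), ξ) ∈ 𝔇 := by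
        refine (h𝔇 _).mpr ?_
        intro q hq
        obtain ⟨z, hz⟩ := hup q hq
        obtain ⟨w, hw⟩ := lwit g q.2 ⟨z, hz⟩
        have hmem : ((xL q.1 g + w, leftForm q.2 g) : E × (E →L[ℝ] ℝ)) ∈ Dp D 𝔇 g :=
          ⟨q.1, q.2, w, by rwa [Prod.mk.eta], hw, rfl⟩
        have eperp : p.2 (xL q.1 g + w) + leftForm q.2 g p.1 = 0 := hperp _ hmem
        have eWw : leftForm ξ g w + leftForm q.2 g W = 0 := (hLag g _).mp hW _ hw
        have hαw : p.2 w = leftForm ξ g w := by rw [hα]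
        have eperp' : p.2 (xL q.1 g) + p.2 w + leftForm q.2 g p.1 = 0 := by
          rw [map_add] at eperp
          linarith
        show ξ q.1 + q.2 (dL g⁻¹ g (p.1 - W)) = 0
        have g1 : ξ q.1 = p.2 (xL q.1 g) := rfl
        have g2 : q.2 (dL g⁻¹ g (p.1 - W))
            = leftForm q.2 g p.1 - leftForm q.2 g W := by
          have h : q.2 (dL g⁻¹ g (p.1 - W)) = leftForm q.2 g (p.1 - W) := rfl
          rw [h, map_sub]
        rw [g1, g2]
        linarith
      refine ⟨dL g⁻¹ g (p.1 - W), ξ, W, hx𝔇, hW, ?_⟩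
      rw [hα, hx0L]
      simp
  · -- `D' 1 = 𝔇`
    intro p
    rw [mem_Dp]
    constructor
    · rintro ⟨x, ξ, v, hx, hv, rfl⟩
      rw [leftForm_one] at hv ⊢
      rw [xL_one]
      have hv0 : (v, (0 : E →L[ℝ] ℝ)) ∈ D 1 := hker (v, ξ) hv
      have hsum : ((x, ξ) + (v, (0 : E →L[ℝ] ℝ))) ∈ 𝔇 := add_mem hx (hlow v hv0)
      have he : ((x, ξ) + (v, (0 : E →L[ℝ] ℝ)) : E × (E →L[ℝ] ℝ)) = (x + v, ξ) := by
        refine Prod.ext_iff.mpr ⟨rfl, ?_⟩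
        show ξ + 0 = ξ
        rw [add_zero]
      rwa [he] at hsum
    · intro hp
      obtain ⟨z, hz⟩ := hup p hp
      refine ⟨p.1, p.2, 0, by rwa [Prod.mk.eta], ?_, ?_⟩
      · rw [leftForm_one]
        exact hid (z, p.2) hz
      · rw [leftForm_one, xL_one, add_zero, Prod.mk.eta]

end DiracPaper
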